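/- The continuous monotone image of an arc in a Hausdorff space is an arc: if f : [0,1] → Y is a monotone continuous surjection and Y is a nondegenerate compact Hausdorff space, then Y is homeomorphic to [0,1]. -/

import Mathlib

set_option maxHeartbeats 1000000


open unitInterval Set Real

/-- The monotone continuous image of an arc in a nondegenerate compact Hausdorff
space is an arc: `Y` is homeomorphic to `[0,1]`. -/
theorem stmt_4 (Y : Type*) [TopologicalSpace Y] [CompactSpace Y] [T2Space Y]
    (f : unitInterval → Y) (hf : Continuous f) (hsurj : Function.Surjective f)
    (hmono : ∀ y : Y, IsConnected (f ⁻¹' {y}))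
    (hY : ∃ y₁ y₂ : Y, y₁ ≠ y₂) :
    Nonempty (Y ≃ₜ unitInterval) := by
  classical
  -- the fibers, viewed as subsets of ℝ
  set S : Y → Set ℝ := fun y => Subtype.val '' (f ⁻¹' {y}) with hS_def
  have hSne : ∀ y, (S y).Nonempty := by
    intro y
    obtain ⟨t, ht⟩ := hsurj y
    exact ⟨t, t, by simp [ht], rfl⟩
  have hScomp : ∀ y, IsCompact (S y) := fun y =>
    ((isClosed_singleton.preimage hf).isCompact).image continuous_subtype_val
  have hSconn : ∀ y, IsConnected (S y) := fun y =>
    (hmono y).image _ continuous_subtype_val.continuousOn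
  set m : Y → ℝ := fun y => sInf (S y) with hm_def
  set M : Y → ℝ := fun y => sSup (S y) with hM_def
  have hIcc : ∀ y, S y = Icc (m y) (M y) := fun y =>
    eq_Icc_of_connected_compact (hSconn y) (hScomp y)
  have hmmem : ∀ y, m y ∈ S y := fun y => (hScomp y).sInf_mem (hSne y)
  have hMmem : ∀ y, M y ∈ S y := fun y => (hScomp y).sSup_mem (hSne y)
  have hbound : ∀ y, ∀ x ∈ S y, 0 ≤ x ∧ x ≤ 1 := by
    rintro y x ⟨t, -, rfl⟩; exact ⟨t.2.1, t.2.2⟩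
  have hmem : ∀ t : unitInterval, (t : ℝ) ∈ S (f t) := fun t => ⟨t, rfl, rfl⟩
  have hsep : ∀ {x : ℝ} {y y' : Y}, x ∈ S y → x ∈ S y' → y = y' := by
    rintro x y y' hx hx'
    obtain ⟨t, ht, rfl⟩ := hx
    obtain ⟨t', ht', htt⟩ := hx'
    cases Subtype.ext htt
    simp only [mem_preimage, mem_singleton_iff] at ht ht'
    rw [← ht, ← ht']
  have minj : Function.Injective m := fun y y' h => hsep (hmmem y) (h ▸ hmmem y')
  letI lin : LinearOrder Y := LinearOrder.lift' m minj
  have le_def : ∀ {y y' : Y}, y ≤ y' ↔ m y ≤ m y' := Iff.rfl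
  have lt_def : ∀ {y y' : Y}, y < y' ↔ m y < m y' := by
    intro y y'
    rw [lt_iff_le_not_ge, lt_iff_le_not_ge]
    exact and_congr le_def (not_congr le_def)
  have hmMle : ∀ y, m y ≤ M y := by
    intro y
    have h := hmmem y
    rw [hIcc y] at h
    exact h.2
  -- fibers of distinct points are strictly ordered intervals
  have key : ∀ {y y' : Y}, y < y' → M y < m y' := by
    intro y y' h
    by_contra hc
    push_neg at hc
    have h1 : m y < m y' := lt_def.mp h
    have h2 : m y' ∈ S y := by
      rw [hIcc y]; exact ⟨h1.le, hc⟩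
    exact absurd (hsep h2 (hmmem y')) (ne_of_lt h)
  have hlt : ∀ (y : Y) (t : unitInterval), M y < (t : ℝ) → y < f t := by
    intro y t h
    rcases lt_trichotomy y (f t) with h1 | h1 | h1
    · exact h1
    · exfalso
      have h2 := hmem t
      rw [← h1, hIcc y] at h2
      exact absurd h2.2 (not_le.mpr h)
    · exfalso
      have h2 := key h1
      have h3 := hmem t
      rw [hIcc (f t)] at h3
      have h4 := hmMle y
      linarith [h3.2]
  have hlt' : ∀ (y : Y) (t : unitInterval), (t : ℝ) < m y → f t < y := by
    intro y t h
    rcases lt_trichotomy (f t) y with h1 | h1 | h1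
    · exact h1
    · exfalso
      have h2 := hmem t
      rw [h1, hIcc y] at h2
      exact absurd h2.1 (not_le.mpr h)
    · exfalso
      have h2 := key h1
      have h3 := hmem t
      rw [hIcc (f t)] at h3
      have h4 := hmMle y
      linarith [h3.1]
  have monof : ∀ t t' : unitInterval, t ≤ t' → f t ≤ f t' := by
    intro t t' h
    by_contra hc
    push_neg at hc
    have h2 := key hc
    have h3 := hmem t
    rw [hIcc (f t)] at h3
    have h4 := hmem t'
    rw [hIcc (f t')] at h4
    have h5 : (t : ℝ) ≤ (t' : ℝ) := h
    linarith [h3.1, h4.2]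
  -- f 0 is the bottom, f 1 the top
  have h0mem : (0 : ℝ) ∈ S (f 0) := by simpa using hmem 0
  have h1mem : (1 : ℝ) ∈ S (f 1) := by simpa using hmem 1
  have h0m : m (f 0) = 0 :=
    le_antisymm (csInf_le ⟨0, fun x hx => (hbound _ x hx).1⟩ h0mem)
      (hbound _ _ (hmmem (f 0))).1
  have hbot : ∀ y, f 0 ≤ y := fun y => le_def.mpr (by rw [h0m]; exact (hbound y _ (hmmem y)).1)
  have htop : ∀ y, y ≤ f 1 := by
    intro y
    by_contra hc
    push_neg at hc
    have h2 := key hc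
    have h4 : (1 : ℝ) ≤ M (f 1) := le_csSup ⟨1, fun x hx => (hbound _ x hx).2⟩ h1mem
    have h5 := (hbound y _ (hmmem y)).2
    linarith
  -- density of rational points
  have dens : ∀ {y y' : Y}, y < y' →
      ∃ q : ℚ, ∃ hq : (q : ℝ) ∈ Icc (0 : ℝ) 1, y < f ⟨q, hq⟩ ∧ f ⟨q, hq⟩ < y' := by
    intro y y' h
    obtain ⟨q, hq1, hq2⟩ := exists_rat_btwn (key h)
    have h0 : (0 : ℝ) ≤ q := le_trans (hbound y _ (hmmem y)).1 (le_trans (hmMle y) hq1.le)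
    have h1 : (q : ℝ) ≤ 1 := le_trans hq2.le (hbound y' _ (hmmem y')).2
    exact ⟨q, ⟨h0, h1⟩, hlt y _ hq1, hlt' y' _ hq2⟩
  set D : Set Y :=
    {y : Y | (∃ q : ℚ, ∃ hq : (q : ℝ) ∈ Icc (0 : ℝ) 1, f ⟨q, hq⟩ = y) ∧ f 0 < y ∧ y < f 1}
    with hD_def
  have densD : ∀ {y y' : Y}, y < y' → ∃ d ∈ D, y < d ∧ d < y' := by
    intro y y' h
    obtain ⟨q, hq, h1, h2⟩ := dens h
    exact ⟨f ⟨q, hq⟩, ⟨⟨q, hq, rfl⟩, lt_of_le_of_lt (hbot y) h1,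
      lt_of_lt_of_le h2 (htop y')⟩, h1, h2⟩
  have hDc : D.Countable := by
    have hsub : D ⊆ ⋃ q : ℚ, {y : Y | ∃ hq : (q : ℝ) ∈ Icc (0 : ℝ) 1, f ⟨q, hq⟩ = y} := by
      rintro y ⟨⟨q, hq, hy⟩, -⟩
      exact mem_iUnion.mpr ⟨q, hq, hy⟩
    refine Set.Countable.mono hsub (countable_iUnion fun q => ?_)
    refine Set.Subsingleton.countable ?_
    rintro y₁ ⟨h1, rfl⟩ y₂ ⟨h2, rfl⟩
    rfl
  haveI : Countable ↥D := hDc.to_subtype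
  have h01 : f 0 < f 1 := by
    obtain ⟨y₁, y₂, hne⟩ := hY
    rcases lt_trichotomy y₁ y₂ with h | h | h
    · exact lt_of_le_of_lt (hbot y₁) (lt_of_lt_of_le h (htop y₂))
    · exact absurd h hne
    · exact lt_of_le_of_lt (hbot y₂) (lt_of_lt_of_le h (htop y₁))
  haveI : Nonempty ↥D := by
    obtain ⟨d, hd, -, -⟩ := densD h01
    exact ⟨⟨d, hd⟩⟩
  haveI : DenselyOrdered ↥D := by
    constructor
    rintro ⟨a, ha⟩ ⟨b, hb⟩ hab
    obtain ⟨d, hd, hd1, hd2⟩ := densD (Subtype.mk_lt_mk.mp hab)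
    exact ⟨⟨d, hd⟩, Subtype.mk_lt_mk.mpr hd1, Subtype.mk_lt_mk.mpr hd2⟩
  haveI : NoMinOrder ↥D := by
    constructor
    rintro ⟨a, ha⟩
    obtain ⟨-, hal, -⟩ := ha
    obtain ⟨d, hd, -, hd2⟩ := densD hal
    exact ⟨⟨d, hd⟩, Subtype.mk_lt_mk.mpr hd2⟩
  haveI : NoMaxOrder ↥D := by
    constructor
    rintro ⟨a, ha⟩
    obtain ⟨-, -, har⟩ := ha
    obtain ⟨d, hd, hd1, -⟩ := densD har
    exact ⟨⟨d, hd⟩, Subtype.mk_lt_mk.mpr hd1⟩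
  obtain ⟨e⟩ := Order.iso_of_countable_dense (α := ↥D) (β := ℚ)
  -- the comparison function
  set v : ↥D → ℝ := fun d => arctan (e d) with hv_def
  have hv1 : ∀ d, -(π / 2) < v d := fun d => neg_pi_div_two_lt_arctan _
  have hv2 : ∀ d, v d < π / 2 := fun d => arctan_lt_pi_div_two _
  have hvmono : ∀ {d d' : ↥D}, d < d' → v d < v d' := fun h =>
    arctan_strictMono (by exact_mod_cast e.strictMono h)
  set A : Y → Set ℝ := fun y => insert (-(π / 2)) (v '' {d : ↥D | (d : Y) ≤ y}) with hA_def
  have hbddA : ∀ y, BddAbove (A y) := by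
    intro y
    refine ⟨π / 2, ?_⟩
    rintro x (rfl | ⟨d, -, rfl⟩)
    · linarith [pi_pos]
    · exact (hv2 d).le
  have hneA : ∀ y, (A y).Nonempty := fun y => ⟨_, mem_insert _ _⟩
  set u : Y → ℝ := fun y => sSup (A y) with hu_def
  have hu1 : ∀ y, -(π / 2) ≤ u y := fun y => le_csSup (hbddA y) (mem_insert _ _)
  have hu2 : ∀ y, u y ≤ π / 2 := by
    intro y
    refine csSup_le (hneA y) ?_
    rintro x (rfl | ⟨d, -, rfl⟩)
    · linarith [pi_pos]
    · exact (hv2 d).le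
  have humono : Monotone u := fun y y' h =>
    csSup_le_csSup (hbddA y') (hneA y)
      (insert_subset_insert (image_mono fun d hd => le_trans hd h))
  have hud : ∀ d : ↥D, u (d : Y) = v d := by
    intro d
    refine IsGreatest.csSup_eq ⟨Or.inr ⟨d, show (d : Y) ≤ (d : Y) from le_refl _, rfl⟩, ?_⟩
    rintro x (rfl | ⟨d', hd', rfl⟩)
    · exact (hv1 d).le
    · exact arctan_strictMono.monotone (by exact_mod_cast e.monotone (Subtype.coe_le_coe.mp hd'))
  have hustrict : StrictMono u := by
    intro y y' h
    obtain ⟨d₁, hd₁, h1, h2⟩ := densD h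
    obtain ⟨d₂, hd₂, h3, h4⟩ := densD h2
    have ha : u y ≤ v ⟨d₁, hd₁⟩ := by
      refine csSup_le (hneA y) ?_
      rintro x (rfl | ⟨d', hd', rfl⟩)
      · exact (hv1 _).le
      · exact (hvmono (Subtype.mk_lt_mk.mpr (lt_of_le_of_lt hd' h1))).le
    have hb : v ⟨d₂, hd₂⟩ ≤ u y' := le_csSup (hbddA y') (Or.inr ⟨⟨d₂, hd₂⟩, h4.le, rfl⟩)
    exact lt_of_le_of_lt ha (lt_of_lt_of_le (hvmono (Subtype.mk_lt_mk.mpr h3)) hb)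
  -- package as a map to the interval
  have hJ : -(π / 2) < π / 2 := by linarith [pi_pos]
  haveI : OrdConnected (Icc (-(π / 2)) (π / 2) : Set ℝ) := ordConnected_Icc
  set u' : Y → (Icc (-(π / 2)) (π / 2) : Set ℝ) := fun y => ⟨u y, hu1 y, hu2 y⟩ with hu'_def
  have hwmono : Monotone (u' ∘ f) := fun t t' h =>
    Subtype.mk_le_mk.mpr (humono (monof t t' h))
  have hrange : ∀ q : ℚ, arctan q ∈ range (u ∘ f) := by
    intro q
    obtain ⟨⟨qq, hqq, hfq⟩, -, -⟩ := (e.symm q).2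
    refine ⟨⟨qq, hqq⟩, ?_⟩
    show u (f ⟨qq, hqq⟩) = arctan q
    rw [hfq, hud (e.symm q), hv_def]
    simp
  have hdense : Dense (range (u' ∘ f)) := by
    rw [Subtype.dense_iff]
    have h1 : range (fun q : ℚ => arctan (q : ℝ)) ⊆ range (u ∘ f) := by
      rintro x ⟨q, rfl⟩
      exact hrange q
    have h2 : Ioo (-(π / 2)) (π / 2) ⊆ closure (range (u ∘ f)) := by
      rw [← Real.range_arctan, ← image_univ, ← Rat.denseRange_cast.closure_eq]
      refine (image_closure_subset_closure_image Real.continuous_arctan).trans ?_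
      refine closure_mono ?_
      rw [← Set.range_comp]
      exact h1
    have h3 : Icc (-(π / 2)) (π / 2) ⊆ closure (range (u ∘ f)) :=
      calc Icc (-(π / 2)) (π / 2) = closure (Ioo (-(π / 2)) (π / 2)) := (closure_Ioo hJ.ne).symm
        _ ⊆ closure (closure (range (u ∘ f))) := closure_mono h2
        _ = closure (range (u ∘ f)) := closure_closure
    have h4 : Subtype.val '' range (u' ∘ f) = range (u ∘ f) := by
      rw [← Set.range_comp]
      rfl
    rw [h4]
    exact h3
  have hwcont : Continuous (u' ∘ f) := hwmono.continuous_of_denseRange hdense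
  have hq := Topology.IsQuotientMap.of_surjective_continuous hsurj hf
  have hu'cont : Continuous u' := hq.continuous_iff.mpr hwcont
  have hu'inj : Function.Injective u' := fun y y' h =>
    hustrict.injective (congrArg Subtype.val h)
  have hu'surj : Function.Surjective u' := by
    have hclosed : IsClosed (range u') := (isCompact_range hu'cont).isClosed
    have hdr : Dense (range u') := (hsurj.range_comp u') ▸ hdense
    have : range u' = univ := by rw [← hclosed.closure_eq, hdr.closure_eq]
    exact Set.range_eq_univ.mp this
  let E : Y ≃ (Icc (-(π / 2)) (π / 2) : Set ℝ) := Equiv.ofBijective u' ⟨hu'inj, hu'surj⟩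
  have hEcont : Continuous E := hu'cont
  exact ⟨(Continuous.homeoOfEquivCompactToT2 (f := E) hEcont).trans (iccHomeoI _ _ hJ)⟩
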